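/- Let T be a complete satisfiable L-theory, let Ψ = {ψ_i(x; z̄_i) : i ∈ I} be a set of partitioned L-formulas (each with x a single variable), and let φ(x; ȳ) be a partitioned L-formula. Suppose that for every model M ⊨ T and every b̄ ∈ M^{lg(ȳ)}, there exist i ∈ I and c̄ ∈ M^{lg(z̄_i)} such that φ(M; b̄) = ψ_i(M; c̄). Then there exists a finite subset I_0 ⊆ I such that for every model M ⊨ T and every b̄ ∈ M^{lg(ȳ)}, there exist i ∈ I_0 and c̄ ∈ M^{lg(z̄_i)} such that φ(M; b̄) = ψ_i(M; c̄). -/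

import Mathlib

open FirstOrder Language

/-- `φ(M; b̄)`, the set defined in `M` by the partitioned formula `φ(x; ȳ)` with
parameters `b̄`. -/
def realizeSet (L : Language) (M : Type*) [L.Structure M] {m : ℕ}
    (φ : L.Formula (Unit ⊕ Fin m)) (b : Fin m → M) : Set M :=
  {a : M | φ.Realize (Sum.elim (fun _ => a) b)}

universe w

/-- The formula in variables `ȳ` saying `∃ c̄, ∀ x, (φ(x; ȳ) ↔ ψ(x; c̄))`. -/
noncomputable def eqF {L : Language} {m k : ℕ} (φ : L.Formula (Unit ⊕ Fin m))
    (ψ : L.Formula (Unit ⊕ Fin k)) : L.Formula (Fin m) :=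
  Formula.iExs (Fin k)
    (Formula.iAlls Unit (Formula.relabel (Sum.elim Sum.inr Sum.inl :
        (Unit ⊕ (Fin m ⊕ Fin k)) → (Fin m ⊕ Fin k) ⊕ Unit)
      ((φ.relabel (Sum.map id Sum.inl)).iff (ψ.relabel (Sum.map id Sum.inr)))))

theorem realize_eqF {L : Language} {M : Type*} [L.Structure M] {m k : ℕ}
    (φ : L.Formula (Unit ⊕ Fin m)) (ψ : L.Formula (Unit ⊕ Fin k)) (b : Fin m → M) :
    (eqF φ ψ).Realize b ↔ ∃ c : Fin k → M, realizeSet L M φ b = realizeSet L M ψ c := by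
  simp only [eqF, Formula.realize_iExs, Formula.realize_iAlls, Formula.realize_iff,
    Formula.realize_relabel, realizeSet, Set.ext_iff, Set.mem_setOf_eq]
  refine exists_congr fun c => ?_
  constructor
  · intro H a
    have := H (fun _ => a)
    convert this using 2 <;> funext u <;> rcases u with u | u <;> simp
  · intro H x
    have := H (x ())
    convert this using 2 <;> funext u <;> rcases u with u | u <;> simp

theorem stmt_9 {L : Language} (T : L.Theory) (hcomp : T.IsComplete)
    (hsat : T.IsSatisfiable) {ι : Type*}
    (ψ : ι → (k : ℕ) × L.Formula (Unit ⊕ Fin k)) {m : ℕ}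
    (φ : L.Formula (Unit ⊕ Fin m))
    (h : ∀ (M : Type w) [Nonempty M] [L.Structure M], M ⊨ T → ∀ b : Fin m → M,
      ∃ (i : ι) (c : Fin (ψ i).1 → M), realizeSet L M φ b = realizeSet L M (ψ i).2 c) :
    ∃ s : Finset ι, ∀ (M : Type w) [Nonempty M] [L.Structure M], M ⊨ T →
      ∀ b : Fin m → M, ∃ i ∈ s, ∃ c : Fin (ψ i).1 → M,
        realizeSet L M φ b = realizeSet L M (ψ i).2 c := by
  classical
  by_contra hcon
  push_neg at hcon
  set ρ : ι → L.Formula (Fin m) := fun i => eqF φ (ψ i).2 with hρ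
  -- the sentence saying "there is `b̄` not covered by any `ψ i`, `i ∈ s`"
  let σ : Finset ι → L.Sentence := fun s =>
    Formula.iExs (Fin m) (Formula.relabel (Sum.inr : Fin m → Empty ⊕ Fin m)
      (Formula.iInf fun i : s => (ρ i.1).not))
  have hσ_realize : ∀ (M : Type w) [Nonempty M] [L.Structure M], ∀ s : Finset ι,
      M ⊨ σ s ↔ ∃ b : Fin m → M, ∀ i ∈ s, ¬ (ρ i).Realize b := by
    intro M _ _ s
    simp only [σ, Sentence.Realize, Formula.realize_iExs]
    refine exists_congr fun b => ?_
    simp [Formula.realize_relabel, Formula.realize_iInf, Formula.realize_not]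
  -- every such sentence is a consequence of `T`
  have key : ∀ s : Finset ι, T ⊨ᵇ σ s := by
    intro s
    rcases hcomp.2 (σ s) with hT | hT
    · exact hT
    · exfalso
      obtain ⟨M, hne, hst, hMT, b, hb⟩ := hcon s
      haveI := hne; letI := hst; haveI : M ⊨ T := hMT
      have hnot : M ⊨ (σ s).not := hT.realize_sentence M
      rw [Sentence.realize_not] at hnot
      refine hnot ((hσ_realize M s).2 ⟨b, fun i hi => ?_⟩)
      rw [hρ, realize_eqF]
      rintro ⟨c, hc⟩
      exact hb i hi c hc
  -- a fixed model in universe `w`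
  obtain ⟨M₀, hne₀, hst₀, hMT₀, -⟩ := hcon ∅
  haveI := hne₀; letI := hst₀; haveI : M₀ ⊨ T := hMT₀
  have hM₀ : ∀ s : Finset ι, ∃ b : Fin m → M₀, ∀ i ∈ s, ¬ (ρ i).Realize b :=
    fun s => (hσ_realize M₀ s).1 ((key s).realize_sentence M₀)
  -- build an ultrafilter on tuples
  let S : ι → Set (Fin m → M₀) := fun i => {b | ¬ (ρ i).Realize b}
  let F : Filter (Fin m → M₀) := ⨅ i, Filter.principal (S i)
  haveI hF : F.NeBot := by
    rw [Filter.neBot_iff]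
    intro hbot
    have hemp : (∅ : Set (Fin m → M₀)) ∈ F := by rw [hbot]; exact Filter.mem_bot
    rw [Filter.mem_iInf_finite] at hemp
    obtain ⟨t, ht⟩ := hemp
    rw [Filter.iInf_principal_finset, Filter.mem_principal] at ht
    obtain ⟨b, hb⟩ := hM₀ t
    exact ht (Set.mem_iInter₂.2 fun i hi => hb i hi) 
  let U : Ultrafilter (Fin m → M₀) := Ultrafilter.of F
  have hU : ∀ i, S i ∈ U := by
    intro i
    exact Ultrafilter.of_le F (Filter.le_principal_iff.1 (iInf_le _ i))
  -- the ultrapower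
  let N : Type w := (U : Filter (Fin m → M₀)).Product (fun _ => M₀)
  haveI : Nonempty N := inferInstance
  have hNT : N ⊨ T := by
    rw [Theory.model_iff]
    intro φ₀ hφ₀
    exact (Ultraproduct.sentence_realize _).2
      (Filter.Eventually.of_forall fun a => T.realize_sentence_of_mem hφ₀)
  let bstar : Fin m → N := fun j => (↑(fun b : Fin m → M₀ => b j) : N)
  have hbstar : ∀ i, ¬ (ρ i).Realize bstar := by
    intro i hreal
    have hev : ∀ᶠ b in (U : Filter (Fin m → M₀)), (ρ i).Realize (fun j => b j) :=
      (Ultraproduct.realize_formula_cast (ρ i) (fun j (b : Fin m → M₀) => b j)).1 hreal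
    have hev2 : ∀ᶠ b in (U : Filter (Fin m → M₀)), ¬ (ρ i).Realize b := hU i
    obtain ⟨b, h1, h2⟩ := (hev.and hev2).exists
    exact h2 h1
  obtain ⟨i, c, hc⟩ := h N hNT bstar
  exact hbstar i ((realize_eqF φ (ψ i).2 bstar).2 ⟨c, hc⟩)
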